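/- Let (a,b), (a',b') ∈ ℤ_{≥0}² be distinct pairs with gcd(a,b) = gcd(a',b') = 1, 1/2 ≤ a/b ≤ 2 and 1/2 ≤ a'/b' ≤ 2, and let α be the angle between (a²,b²) and (a'²,b'²). Then there are absolute constants c, C > 0 such that 1 ≤ |ab' − a'b| ≤ C h_{a,b} h_{a',b'} sin α, and consequently sin α ≥ c/(h_{a,b} h_{a',b'}). -/

import Mathlib

noncomputable def vSq (a b : ℕ) : EuclideanSpace ℝ (Fin 2) := WithLp.toLp 2 ![(a : ℝ) ^ 2, (b : ℝ) ^ 2]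

noncomputable def ang (a b a' b' : ℕ) : ℝ :=
  InnerProductGeometry.angle (vSq a b) (vSq a' b')

lemma inner_vSq (a b a' b' : ℕ) :
    (inner ℝ (vSq a b) (vSq a' b') : ℝ) = (a:ℝ)^2*(a':ℝ)^2 + (b:ℝ)^2*(b':ℝ)^2 := by
  simp [vSq, PiLp.inner_apply, Fin.sum_univ_two]
  ring

lemma norm_vSq (a b : ℕ) : ‖vSq a b‖ = Real.sqrt ((a:ℝ)^4 + (b:ℝ)^4) := by
  rw [EuclideanSpace.norm_eq]
  congr 1
  simp [vSq, Fin.sum_univ_two, abs_of_nonneg, sq_nonneg]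
  ring

lemma sin_key (a b a' b' : ℕ) :
    Real.sin (ang a b a' b') * (‖vSq a b‖ * ‖vSq a' b'‖) =
      |(a:ℝ)^2*(b':ℝ)^2 - (a':ℝ)^2*(b:ℝ)^2| := by
  rw [ang, InnerProductGeometry.sin_angle_mul_norm_mul_norm, inner_vSq, inner_vSq, inner_vSq]
  rw [show ((a:ℝ)^2*(a:ℝ)^2 + (b:ℝ)^2*(b:ℝ)^2) * ((a':ℝ)^2*(a':ℝ)^2 + (b':ℝ)^2*(b':ℝ)^2)
      - ((a:ℝ)^2*(a':ℝ)^2 + (b:ℝ)^2*(b':ℝ)^2) * ((a:ℝ)^2*(a':ℝ)^2 + (b:ℝ)^2*(b':ℝ)^2)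
      = ((a:ℝ)^2*(b':ℝ)^2 - (a':ℝ)^2*(b:ℝ)^2)^2 by ring, Real.sqrt_sq_eq_abs]

/-- **Lower bound on the angle.** For distinct pairs `(a,b) ≠ (a',b')` in `ℤ_{≥0}²` with
`gcd(a,b) = gcd(a',b') = 1`, `1/2 ≤ a/b ≤ 2` and `1/2 ≤ a'/b' ≤ 2`, there are absolute
constants `c, C > 0` with `1 ≤ |ab' − a'b| ≤ C h_{a,b} h_{a',b'} sin α`, and consequently
`sin α ≥ c/(h_{a,b} h_{a',b'})`. -/
theorem angle_lower_bound :
    ∃ c C : ℝ, 0 < c ∧ 0 < C ∧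
      ∀ a b a' b' : ℕ, (a, b) ≠ (a', b') →
        Nat.gcd a b = 1 → Nat.gcd a' b' = 1 →
        (1 : ℝ) / 2 ≤ (a : ℝ) / (b : ℝ) → (a : ℝ) / (b : ℝ) ≤ 2 →
        (1 : ℝ) / 2 ≤ (a' : ℝ) / (b' : ℝ) → (a' : ℝ) / (b' : ℝ) ≤ 2 →
        (1 ≤ |(a : ℝ) * (b' : ℝ) - (a' : ℝ) * (b : ℝ)| ∧
          |(a : ℝ) * (b' : ℝ) - (a' : ℝ) * (b : ℝ)| ≤
            C * ((max a b : ℕ) : ℝ) * ((max a' b' : ℕ) : ℝ) * Real.sin (ang a b a' b') ∧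
          c / (((max a b : ℕ) : ℝ) * ((max a' b' : ℕ) : ℝ)) ≤ Real.sin (ang a b a' b')) := by
  refine ⟨1/4, 4, by norm_num, by norm_num, ?_⟩
  intro a b a' b' hne hg hg' h1 h2 h3 h4
  -- nonvanishing
  have hb0 : b ≠ 0 := by rintro rfl; norm_num at h1
  have ha0 : a ≠ 0 := by rintro rfl; rw [Nat.cast_zero, zero_div] at h1; norm_num at h1
  have hb0' : b' ≠ 0 := by rintro rfl; norm_num at h3
  have ha0' : a' ≠ 0 := by rintro rfl; rw [Nat.cast_zero, zero_div] at h3; norm_num at h3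
  have hbR : (0:ℝ) < b := by exact_mod_cast Nat.pos_of_ne_zero hb0
  have haR : (0:ℝ) < a := by exact_mod_cast Nat.pos_of_ne_zero ha0
  have hbR' : (0:ℝ) < b' := by exact_mod_cast Nat.pos_of_ne_zero hb0'
  have haR' : (0:ℝ) < a' := by exact_mod_cast Nat.pos_of_ne_zero ha0'
  -- comparability
  have hba : (b:ℝ) ≤ 2*a := by have := (le_div_iff₀ hbR).mp h1; linarith
  have hab : (a:ℝ) ≤ 2*b := by have := (div_le_iff₀ hbR).mp h2; linarith
  have hba' : (b':ℝ) ≤ 2*a' := by have := (le_div_iff₀ hbR').mp h3; linarith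
  have hab' : (a':ℝ) ≤ 2*b' := by have := (div_le_iff₀ hbR').mp h4; linarith
  obtain ⟨H, hH⟩ : ∃ H : ℝ, H = ((max a b : ℕ) : ℝ) := ⟨_, rfl⟩
  obtain ⟨H', hH'⟩ : ∃ H' : ℝ, H' = ((max a' b' : ℕ) : ℝ) := ⟨_, rfl⟩
  have hHmax : H = max (a:ℝ) (b:ℝ) := by rw [hH]; push_cast; rfl
  have hHmax' : H' = max (a':ℝ) (b':ℝ) := by rw [hH']; push_cast; rfl
  have haH : (a:ℝ) ≤ H := by rw [hHmax]; exact le_max_left _ _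
  have hbH : (b:ℝ) ≤ H := by rw [hHmax]; exact le_max_right _ _
  have haH' : (a':ℝ) ≤ H' := by rw [hHmax']; exact le_max_left _ _
  have hbH' : (b':ℝ) ≤ H' := by rw [hHmax']; exact le_max_right _ _
  have hH2a : H ≤ 2*a := by rw [hHmax]; exact max_le (by linarith) hba
  have hH2b : H ≤ 2*b := by rw [hHmax]; exact max_le hab (by linarith)
  have hH2a' : H' ≤ 2*a' := by rw [hHmax']; exact max_le (by linarith) hba'
  have hH2b' : H' ≤ 2*b' := by rw [hHmax']; exact max_le hab' (by linarith)
  have hHpos : 0 < H := lt_of_lt_of_le haR haH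
  have hHpos' : 0 < H' := lt_of_lt_of_le haR' haH'
  -- 1 ≤ D
  have hneq : a * b' ≠ a' * b := by
    intro h
    have hda : a ∣ a' := (Nat.Coprime.dvd_of_dvd_mul_right hg) ⟨b', h.symm⟩
    have hda' : a' ∣ a := (Nat.Coprime.dvd_of_dvd_mul_right hg') ⟨b, h⟩
    have haa : a = a' := Nat.dvd_antisymm hda hda'
    subst haa
    have : b' = b := Nat.eq_of_mul_eq_mul_left (Nat.pos_of_ne_zero ha0) h
    exact hne (by rw [this])
  have hD1 : (1:ℝ) ≤ |(a : ℝ) * (b' : ℝ) - (a' : ℝ) * (b : ℝ)| := by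
    have hz : ((a*b' : ℕ):ℤ) ≠ ((a'*b : ℕ):ℤ) := by exact_mod_cast hneq
    have := Int.one_le_abs (sub_ne_zero.mpr hz)
    have h2 : (1:ℝ) ≤ |(((a*b':ℕ):ℤ) - ((a'*b:ℕ):ℤ) : ℤ)| := by exact_mod_cast this
    push_cast at h2
    convert h2 using 2
  have hDnn : (0:ℝ) ≤ |(a : ℝ) * (b' : ℝ) - (a' : ℝ) * (b : ℝ)| := abs_nonneg _
  -- norms
  have hNu : ‖vSq a b‖ ≤ Real.sqrt 2 * H^2 := by
    rw [norm_vSq]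
    have h2H : (a:ℝ)^4 + (b:ℝ)^4 ≤ 2 * (H^2)^2 := by
      nlinarith [pow_le_pow_left₀ haR.le haH 4, pow_le_pow_left₀ hbR.le hbH 4]
    calc Real.sqrt ((a:ℝ)^4 + (b:ℝ)^4) ≤ Real.sqrt (2 * (H^2)^2) := Real.sqrt_le_sqrt h2H
      _ = Real.sqrt 2 * H^2 := by
          rw [Real.sqrt_mul (by norm_num), Real.sqrt_sq (sq_nonneg H)]
  have hNv : ‖vSq a' b'‖ ≤ Real.sqrt 2 * H'^2 := by
    rw [norm_vSq]
    have h2H : (a':ℝ)^4 + (b':ℝ)^4 ≤ 2 * (H'^2)^2 := by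
      nlinarith [pow_le_pow_left₀ haR'.le haH' 4, pow_le_pow_left₀ hbR'.le hbH' 4]
    calc Real.sqrt ((a':ℝ)^4 + (b':ℝ)^4) ≤ Real.sqrt (2 * (H'^2)^2) := Real.sqrt_le_sqrt h2H
      _ = Real.sqrt 2 * H'^2 := by
          rw [Real.sqrt_mul (by norm_num), Real.sqrt_sq (sq_nonneg H')]
  have hNuNv : ‖vSq a b‖ * ‖vSq a' b'‖ ≤ 2 * H^2 * H'^2 := by
    have hs2 : Real.sqrt 2 * Real.sqrt 2 = 2 := Real.mul_self_sqrt (by norm_num)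
    have h1' : ‖vSq a b‖ * ‖vSq a' b'‖ ≤ (Real.sqrt 2 * H^2) * (Real.sqrt 2 * H'^2) :=
      mul_le_mul hNu hNv (norm_nonneg _) (by positivity)
    have heq : (Real.sqrt 2 * H^2) * (Real.sqrt 2 * H'^2) = 2 * H^2 * H'^2 := by
      rw [show (Real.sqrt 2 * H^2) * (Real.sqrt 2 * H'^2)
          = (Real.sqrt 2 * Real.sqrt 2) * (H^2*H'^2) from by ring, hs2]
      ring
    linarith
  -- key identity
  have hsin0 : 0 ≤ Real.sin (ang a b a' b') :=
    Real.sin_nonneg_of_nonneg_of_le_pi (InnerProductGeometry.angle_nonneg _ _)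
      (InnerProductGeometry.angle_le_pi _ _)
  have hkey : Real.sin (ang a b a' b') * (‖vSq a b‖ * ‖vSq a' b'‖)
      = |(a : ℝ) * (b' : ℝ) - (a' : ℝ) * (b : ℝ)| * ((a:ℝ)*(b':ℝ) + (a':ℝ)*(b:ℝ)) := by
    rw [sin_key]
    rw [show (a:ℝ)^2*(b':ℝ)^2 - (a':ℝ)^2*(b:ℝ)^2
        = ((a:ℝ)*(b':ℝ) - (a':ℝ)*(b:ℝ)) * ((a:ℝ)*(b':ℝ) + (a':ℝ)*(b:ℝ)) by ring,
      abs_mul, abs_of_nonneg (by positivity : (0:ℝ) ≤ (a:ℝ)*(b':ℝ) + (a':ℝ)*(b:ℝ))]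
  -- combine
  have hsum : H*H'/2 ≤ (a:ℝ)*(b':ℝ) + (a':ℝ)*(b:ℝ) := by
    have t1 : H * H' ≤ (2*(a:ℝ))*(2*(b':ℝ)) :=
      mul_le_mul hH2a hH2b' hHpos'.le (by positivity)
    have t2 : H * H' ≤ (2*(b:ℝ))*(2*(a':ℝ)) :=
      mul_le_mul hH2b hH2a' hHpos'.le (by positivity)
    linarith only [t1, t2]
  have hchain : |(a : ℝ) * (b' : ℝ) - (a' : ℝ) * (b : ℝ)| * (H*H'/2)
      ≤ Real.sin (ang a b a' b') * (2 * H^2 * H'^2) := by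
    calc |(a : ℝ) * (b' : ℝ) - (a' : ℝ) * (b : ℝ)| * (H*H'/2)
        ≤ |(a : ℝ) * (b' : ℝ) - (a' : ℝ) * (b : ℝ)| * ((a:ℝ)*(b':ℝ) + (a':ℝ)*(b:ℝ)) := by
          exact mul_le_mul_of_nonneg_left hsum hDnn
      _ = Real.sin (ang a b a' b') * (‖vSq a b‖ * ‖vSq a' b'‖) := hkey.symm
      _ ≤ Real.sin (ang a b a' b') * (2 * H^2 * H'^2) :=
          mul_le_mul_of_nonneg_left hNuNv hsin0
  have hmain : |(a : ℝ) * (b' : ℝ) - (a' : ℝ) * (b : ℝ)|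
      ≤ 4 * H * H' * Real.sin (ang a b a' b') := by
    have hh : (0:ℝ) < H*H'/2 := by positivity
    rw [← mul_le_mul_iff_of_pos_right hh]
    calc |(a : ℝ) * (b' : ℝ) - (a' : ℝ) * (b : ℝ)| * (H*H'/2)
        ≤ Real.sin (ang a b a' b') * (2 * H^2 * H'^2) := hchain
      _ = 4 * H * H' * Real.sin (ang a b a' b') * (H*H'/2) := by ring
  refine ⟨hD1, ?_, ?_⟩
  · rw [← hH, ← hH']; exact hmain
  · rw [← hH, ← hH', div_le_iff₀ (mul_pos hHpos hHpos')]
    linarith only [hD1, hmain]
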